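/- The operator F(φ)(n) := some (0 < φ(2^{-n})) if |φ(2^{-n})| > 3·2^{-n}, else none, is a realizer of the Kleenean sign function: if φ is a rational Cauchy name of x ∈ ℝ (i.e., ∀ ε>0 rational, |x − φ(ε)| ≤ ε), then F(φ) is a Kleenean name of sign_K(x), which is ⊥_K if x = 0 and the Kleenean Boolean (0 < x)_K otherwise. -/

import Mathlib

/-- The realizer of the Kleenean sign function. -/
noncomputable def signRealizer (φ : ℚ → ℚ) (n : ℕ) : Option Bool :=
  if 3 * ((2:ℚ)^n)⁻¹ < |φ (((2:ℚ)^n)⁻¹)| then some (decide (0 < φ (((2:ℚ)^n)⁻¹)))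
  else none

/-- `signRealizer` realizes the Kleenean sign function: if `φ` is a rational name of
`x` then `signRealizer φ` is a Kleenean name of `⊥_K` when `x = 0` and of the
Kleenean Boolean `(0 < x)_K` when `x ≠ 0`. -/
theorem signRealizer_correct (x : ℝ) (φ : ℚ → ℚ)
    (hφ : ∀ ε : ℚ, 0 < ε → |x - (φ ε : ℝ)| ≤ (ε : ℝ)) :
    (x = 0 → ∀ n : ℕ, signRealizer φ n = none) ∧
    (x ≠ 0 → ∃ n : ℕ, signRealizer φ n = some (decide (0 < x)) ∧
      ∀ m < n, signRealizer φ m = none) := by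
  have hεpos : ∀ n : ℕ, (0:ℚ) < ((2:ℚ)^n)⁻¹ := fun n => by positivity
  constructor
  · rintro rfl n
    have h := hφ (((2:ℚ)^n)⁻¹) (hεpos n)
    rw [zero_sub, abs_neg] at h
    unfold signRealizer
    rw [if_neg]
    push_neg
    have h' : |φ (((2:ℚ)^n)⁻¹)| ≤ ((2:ℚ)^n)⁻¹ := by
      rw [← Rat.cast_abs] at h
      exact_mod_cast h
    nlinarith [hεpos n, abs_nonneg (φ (((2:ℚ)^n)⁻¹))]
  · intro hx
    -- key: whenever the test succeeds, sign of φ equals sign of x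
    have key : ∀ n : ℕ, 3 * ((2:ℚ)^n)⁻¹ < |φ (((2:ℚ)^n)⁻¹)| →
        ((0:ℚ) < φ (((2:ℚ)^n)⁻¹) ↔ 0 < x) := by
      intro n hn
      set ε : ℚ := ((2:ℚ)^n)⁻¹ with hε
      have hεp : (0:ℚ) < ε := hεpos n
      have hclose := hφ ε hεp
      have hεR : (0:ℝ) < (ε:ℝ) := by exact_mod_cast hεp
      have hnR : 3 * (ε:ℝ) < |(φ ε : ℝ)| := by
        rw [← Rat.cast_abs] at *
        exact_mod_cast hn
      have habs := abs_sub_abs_le_abs_sub x (φ ε : ℝ)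
      constructor
      · intro hpos
        have hposR : (0:ℝ) < (φ ε : ℝ) := by exact_mod_cast hpos
        have : |(φ ε : ℝ)| = (φ ε : ℝ) := abs_of_pos hposR
        have hxlb : (φ ε : ℝ) - ε ≤ x := by
          have := abs_sub_le_iff.mp hclose
          linarith [this.2]
        linarith
      · intro hpos
        by_contra hneg
        push_neg at hneg
        have hnegR : (φ ε : ℝ) ≤ 0 := by exact_mod_cast hneg
        have : |(φ ε : ℝ)| = -(φ ε : ℝ) := abs_of_nonpos hnegR
        have := abs_sub_le_iff.mp hclose
        linarith [this.1]
    -- existence of a good n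
    have hex : ∃ n : ℕ, signRealizer φ n ≠ none := by
      have habs : (0:ℝ) < |x| := abs_pos.mpr hx
      obtain ⟨n, hn⟩ := pow_unbounded_of_one_lt (5 / |x| : ℝ) (by norm_num : (1:ℝ) < 2)
      refine ⟨n, ?_⟩
      have hεp := hεpos n
      have hεR : (0:ℝ) < (((2:ℚ)^n)⁻¹ : ℝ) := by exact_mod_cast hεp
      have h5 : 5 * ((((2:ℚ)^n)⁻¹ : ℚ) : ℝ) < |x| := by
        have h2 : (((2:ℚ)^n : ℚ) : ℝ) = (2:ℝ)^n := by push_cast; ring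
        rw [Rat.cast_inv, h2]
        rw [div_lt_iff₀ habs] at hn
        rw [mul_inv_lt_iff₀ (by positivity)]
        linarith
      have hclose := hφ _ hεp
      have : 3 * ((((2:ℚ)^n)⁻¹ : ℚ) : ℝ) < |(φ (((2:ℚ)^n)⁻¹) : ℝ)| := by
        have := abs_sub_abs_le_abs_sub x (φ (((2:ℚ)^n)⁻¹) : ℝ)
        linarith
      have hQ : 3 * ((2:ℚ)^n)⁻¹ < |φ (((2:ℚ)^n)⁻¹)| := by
        rw [← Rat.cast_abs] at this
        exact_mod_cast this
      simp [signRealizer, hQ]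
    classical
    refine ⟨Nat.find hex, ?_, fun m hm => ?_⟩
    · have h := Nat.find_spec hex
      have hdef : signRealizer φ (Nat.find hex) = if 3 * ((2:ℚ)^(Nat.find hex))⁻¹ < |φ (((2:ℚ)^(Nat.find hex))⁻¹)| then some (decide (0 < φ (((2:ℚ)^(Nat.find hex))⁻¹))) else none := rfl
      rw [hdef] at h ⊢
      by_cases hc : 3 * ((2:ℚ)^(Nat.find hex))⁻¹ < |φ (((2:ℚ)^(Nat.find hex))⁻¹)|
      · rw [if_pos hc]
        congr 1
        have := key _ hc
        simp only [decide_eq_decide]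
        exact this
      · simp only [if_neg hc, ne_eq, not_true_eq_false] at h
    · have h := Nat.find_min hex hm
      simpa using h
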